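/- Let H be self-adjoint and bounded below with H + N > 1, and suppose V₂ ∈ W^{1,∞} is such that (H+N)^{1/2} V₂ (H+N)^{-1/2} is a bounded operator on L². If u ∈ C([0,T], L²) solves the integral equation with initial datum φ ∈ H¹_Q = D((H+N)^{1/2}) and V₁ ∈ L^∞, then u ∈ C([0,T], H¹_Q). (Regularity: the H¹_Q solution cannot blow up before the L² solution.) -/

import Mathlib

open MeasureTheory intervalIntegral
open scoped InnerProductSpace

noncomputable section

section VolterraAux

variable {F : Type*} [NormedAddCommGroup F] [NormedSpace ℂ F] [CompleteSpace F]

/-- Joint continuity of `t ↦ V (f t) (h t)` for an isometric group `V`. -/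
lemma group_apply_continuous (V : ℝ → F →L[ℂ] F) (hV0 : V 0 = 1)
    (hVadd : ∀ s t : ℝ, V (s + t) = V s * V t)
    (hViso : ∀ (t : ℝ) (x : F), ‖V t x‖ = ‖x‖)
    (hVcont : ∀ x : F, Continuous fun t => V t x)
    {α : Type*} [TopologicalSpace α]
    {f : α → ℝ} {h : α → F} (hf : Continuous f) (hh : Continuous h) :
    Continuous fun t => V (f t) (h t) := by
  rw [continuous_iff_continuousAt]
  intro t₀
  have key : ∀ t, V (f t) (h t)
      = V (f t) (h t - h t₀) + V (f t - f t₀) (V (f t₀) (h t₀)) := by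
    intro t
    have h1 : V (f t - f t₀) (V (f t₀) (h t₀)) = V (f t) (h t₀) := by
      have h2 := hVadd (f t - f t₀) (f t₀)
      rw [sub_add_cancel] at h2
      rw [h2, ContinuousLinearMap.mul_apply]
    rw [h1, map_sub]
    abel
  have h1 : Filter.Tendsto (fun t => V (f t) (h t - h t₀)) (nhds t₀) (nhds 0) := by
    apply squeeze_zero_norm (fun t => (hViso (f t) (h t - h t₀)).le)
    have h2 : Filter.Tendsto (fun t => h t - h t₀) (nhds t₀) (nhds 0) := by
      simpa using (hh.tendsto t₀).sub_const (h t₀)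
    simpa using h2.norm
  have h2 : Filter.Tendsto (fun t => V (f t - f t₀) (V (f t₀) (h t₀))) (nhds t₀)
      (nhds (V (f t₀) (h t₀))) := by
    have hs : Filter.Tendsto (fun t => f t - f t₀) (nhds t₀) (nhds 0) := by
      simpa using (hf.tendsto t₀).sub_const (f t₀)
    have h3 := ((hVcont (V (f t₀) (h t₀))).tendsto 0).comp hs
    simpa [hV0, Function.comp_def] using h3
  have h4 := h1.add h2
  rw [zero_add] at h4
  exact (Filter.Tendsto.congr (fun t => (key t).symm) h4 : _)

/-- Existence and uniqueness for the linear Volterra integral equation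
`x t = V t η + i⁻¹ ∫₀ᵗ V (t-τ) (c τ • M (x τ)) dτ` on `C([0,T], F)`. -/
lemma volterra_existsUnique (T : ℝ) (hT : 0 < T)
    (V : ℝ → F →L[ℂ] F) (hV0 : V 0 = 1)
    (hVadd : ∀ s t : ℝ, V (s + t) = V s * V t)
    (hViso : ∀ (t : ℝ) (x : F), ‖V t x‖ = ‖x‖)
    (hVcont : ∀ x : F, Continuous fun t => V t x)
    (c : ℝ → ℂ) (hcc : Continuous c) (C : ℝ) (hCb : ∀ τ : ℝ, ‖c τ‖ ≤ C)
    (M : F →L[ℂ] F) (η : F) :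
    ∃! x : C(Set.Icc (0 : ℝ) T, F),
      ∀ t : Set.Icc (0 : ℝ) T, x t = V (t : ℝ) η + (Complex.I)⁻¹ •
        ∫ τ in (0 : ℝ)..(t : ℝ),
          V ((t : ℝ) - τ) (c τ • M (x (Set.projIcc 0 T hT.le τ))) := by
  classical
  set p : ℝ → Set.Icc (0 : ℝ) T := Set.projIcc 0 T hT.le with hp
  have hgcont : ∀ x : C(Set.Icc (0 : ℝ) T, F),
      Continuous fun τ : ℝ => V (-τ) (c τ • M (x (p τ))) := by
    intro x
    exact group_apply_continuous V hV0 hVadd hViso hVcont continuous_neg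
      (hcc.smul (M.continuous.comp (x.continuous.comp continuous_projIcc)))
  have hgcont2 : ∀ (x : C(Set.Icc (0 : ℝ) T, F)) (t : ℝ),
      Continuous fun τ : ℝ => V (t - τ) (c τ • M (x (p τ))) := by
    intro x t
    exact group_apply_continuous V hV0 hVadd hViso hVcont
      (continuous_const.sub continuous_id)
      (hcc.smul (M.continuous.comp (x.continuous.comp continuous_projIcc)))
  have hginteg : ∀ (x : C(Set.Icc (0 : ℝ) T, F)) (a b : ℝ),
      IntervalIntegrable (fun τ => V (-τ) (c τ • M (x (p τ)))) volume a b :=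
    fun x a b => (hgcont x).intervalIntegrable a b
  let Φ : C(Set.Icc (0 : ℝ) T, F) → C(Set.Icc (0 : ℝ) T, F) := fun x =>
    ⟨fun t => V (t : ℝ)
        (η + (Complex.I)⁻¹ • ∫ τ in (0 : ℝ)..(t : ℝ), V (-τ) (c τ • M (x (p τ)))),
     by
       apply group_apply_continuous V hV0 hVadd hViso hVcont continuous_subtype_val
       exact continuous_const.add (continuous_const.smul
         ((continuous_primitive (hginteg x) 0).comp continuous_subtype_val))⟩
  have hΦ : ∀ (x : C(Set.Icc (0 : ℝ) T, F)) (t : Set.Icc (0 : ℝ) T),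
      Φ x t = V (t : ℝ) η + (Complex.I)⁻¹ •
        ∫ τ in (0 : ℝ)..(t : ℝ), V ((t : ℝ) - τ) (c τ • M (x (p τ))) := by
    intro x t
    show V (t : ℝ) (η + _ • _) = _
    rw [map_add, ContinuousLinearMap.map_smul]
    congr 1
    congr 1
    rw [← ContinuousLinearMap.intervalIntegral_comp_comm (V (t : ℝ)) (hginteg x 0 (t : ℝ))]
    refine intervalIntegral.integral_congr fun τ _ => ?_
    have h2 := hVadd ((t : ℝ)) (-τ)
    calc V ((t : ℝ)) (V (-τ) (c τ • M (x (p τ))))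
        = V ((t : ℝ) + -τ) (c τ • M (x (p τ))) := by
          rw [h2, ContinuousLinearMap.mul_apply]
      _ = V ((t : ℝ) - τ) (c τ • M (x (p τ))) := by rw [sub_eq_add_neg]
  have hC0 : 0 ≤ C := (norm_nonneg (c 0)).trans (hCb 0)
  set K : ℝ := C * ‖M‖ with hK
  have hK0 : 0 ≤ K := mul_nonneg hC0 (norm_nonneg _)
  -- the iterated contraction estimate
  have iter : ∀ (n : ℕ) (x y : C(Set.Icc (0 : ℝ) T, F)) (t : Set.Icc (0 : ℝ) T),
      ‖(Φ^[n] x) t - (Φ^[n] y) t‖ ≤ K ^ n * (t : ℝ) ^ n / n.factorial * ‖x - y‖ := by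
    intro n
    induction n with
    | zero =>
      intro x y t
      simpa using ContinuousMap.norm_coe_le_norm (x - y) t
    | succ n ih =>
      intro x y t
      rw [Function.iterate_succ_apply', Function.iterate_succ_apply']
      set a := Φ^[n] x with ha
      set b := Φ^[n] y with hb
      have ht0 : (0 : ℝ) ≤ (t : ℝ) := t.2.1
      have hdiff : Φ a t - Φ b t = (Complex.I)⁻¹ •
          ∫ τ in (0 : ℝ)..(t : ℝ), V ((t : ℝ) - τ) (c τ • M (a (p τ) - b (p τ))) := by
        rw [hΦ a t, hΦ b t, add_sub_add_left_eq_sub, ← smul_sub,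
          ← intervalIntegral.integral_sub
            ((hgcont2 a (t : ℝ)).intervalIntegrable 0 (t : ℝ))
            ((hgcont2 b (t : ℝ)).intervalIntegrable 0 (t : ℝ))]
        congr 1
        refine intervalIntegral.integral_congr fun τ _ => ?_
        rw [← map_sub, ← smul_sub, ← map_sub]
      have hbound : ∀ τ ∈ Set.Ioc (0 : ℝ) (t : ℝ),
          ‖V ((t : ℝ) - τ) (c τ • M (a (p τ) - b (p τ)))‖
            ≤ K * (K ^ n * τ ^ n / n.factorial * ‖x - y‖) := by
        intro τ hτ
        have hτT : τ ∈ Set.Icc (0 : ℝ) T := ⟨hτ.1.le, hτ.2.trans t.2.2⟩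
        have hpτ : ((p τ : ℝ)) = τ := by rw [hp, Set.projIcc_of_mem hT.le hτT]
        have h1 : ‖a (p τ) - b (p τ)‖ ≤ K ^ n * τ ^ n / n.factorial * ‖x - y‖ := by
          have h2 := ih x y (p τ)
          rwa [hpτ] at h2
        calc ‖V ((t : ℝ) - τ) (c τ • M (a (p τ) - b (p τ)))‖
            = ‖c τ‖ * ‖M (a (p τ) - b (p τ))‖ := by rw [hViso, norm_smul]
          _ ≤ C * (‖M‖ * ‖a (p τ) - b (p τ)‖) :=
              mul_le_mul (hCb τ) (M.le_opNorm _) (norm_nonneg _) hC0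
          _ ≤ C * (‖M‖ * (K ^ n * τ ^ n / n.factorial * ‖x - y‖)) := by gcongr
          _ = K * (K ^ n * τ ^ n / n.factorial * ‖x - y‖) := by rw [hK]; ring
      have hnorm : ‖Φ a t - Φ b t‖
          ≤ |∫ τ in (0 : ℝ)..(t : ℝ), K * (K ^ n * τ ^ n / n.factorial * ‖x - y‖)| := by
        rw [hdiff, norm_smul]
        have hIinv : ‖(Complex.I)⁻¹‖ = 1 := by
          rw [norm_inv, Complex.norm_I, inv_one]
        rw [hIinv, one_mul]
        apply intervalIntegral.norm_integral_le_abs_of_norm_le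
        · refine MeasureTheory.ae_restrict_of_forall_mem measurableSet_uIoc ?_
          intro τ hτ
          rw [Set.uIoc_of_le ht0] at hτ
          exact hbound τ hτ
        · apply Continuous.intervalIntegrable
          fun_prop
      have hval : (∫ τ in (0 : ℝ)..(t : ℝ), K * (K ^ n * τ ^ n / n.factorial * ‖x - y‖))
          = K ^ (n + 1) * (t : ℝ) ^ (n + 1) / (n + 1).factorial * ‖x - y‖ := by
        have h5 : ∀ τ : ℝ, K * (K ^ n * τ ^ n / n.factorial * ‖x - y‖)
            = (K * K ^ n / n.factorial * ‖x - y‖) * τ ^ n := by intro τ; ring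
        rw [intervalIntegral.integral_congr fun τ _ => h5 τ,
          intervalIntegral.integral_const_mul, integral_pow, Nat.factorial_succ]
        have hfac : ((n.factorial : ℝ)) ≠ 0 := by positivity
        push_cast
        field_simp
        ring
      have hnn : 0 ≤ K ^ (n + 1) * (t : ℝ) ^ (n + 1) / (n + 1).factorial * ‖x - y‖ :=
        mul_nonneg (div_nonneg (mul_nonneg (pow_nonneg hK0 _) (pow_nonneg ht0 _))
          (Nat.cast_nonneg _)) (norm_nonneg _)
      calc ‖Φ a t - Φ b t‖
          ≤ |∫ τ in (0 : ℝ)..(t : ℝ), K * (K ^ n * τ ^ n / n.factorial * ‖x - y‖)| := hnorm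
        _ = K ^ (n + 1) * (t : ℝ) ^ (n + 1) / (n + 1).factorial * ‖x - y‖ := by
            rw [hval, abs_of_nonneg hnn]
  -- distance estimate on the sup norm
  have hdist : ∀ (n : ℕ) (x y : C(Set.Icc (0 : ℝ) T, F)),
      dist (Φ^[n] x) (Φ^[n] y) ≤ (K * T) ^ n / n.factorial * dist x y := by
    intro n x y
    rw [dist_eq_norm, dist_eq_norm]
    have hnn : 0 ≤ (K * T) ^ n / n.factorial * ‖x - y‖ :=
      mul_nonneg (div_nonneg (pow_nonneg (mul_nonneg hK0 hT.le) n) (Nat.cast_nonneg _))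
        (norm_nonneg _)
    refine (ContinuousMap.norm_le _ hnn).2 fun t => ?_
    calc ‖(Φ^[n] x - Φ^[n] y) t‖ = ‖(Φ^[n] x) t - (Φ^[n] y) t‖ := by
          simp [ContinuousMap.sub_apply]
      _ ≤ K ^ n * (t : ℝ) ^ n / n.factorial * ‖x - y‖ := iter n x y t
      _ ≤ (K * T) ^ n / n.factorial * ‖x - y‖ := by
          rw [mul_pow K T]
          have h7 : K ^ n * (t : ℝ) ^ n ≤ K ^ n * T ^ n :=
            mul_le_mul_of_nonneg_left (pow_le_pow_left₀ t.2.1 t.2.2 n) (pow_nonneg hK0 n)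
          have h8 : (0:ℝ) < n.factorial := by positivity
          exact mul_le_mul_of_nonneg_right ((div_le_div_iff_of_pos_right h8).2 h7) (norm_nonneg _)
  obtain ⟨n, hn⟩ : ∃ n : ℕ, (K * T) ^ n / n.factorial < 1 := by
    have h6 := FloorSemiring.tendsto_pow_div_factorial_atTop (K * T)
    exact (h6.eventually_lt_const one_pos).exists
  have hnn' : 0 ≤ (K * T) ^ n / n.factorial :=
    div_nonneg (pow_nonneg (mul_nonneg hK0 hT.le) n) (Nat.cast_nonneg _)
  set κ : NNReal := ⟨(K * T) ^ n / n.factorial, hnn'⟩ with hκ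
  have hcontr : ContractingWith κ (Φ^[n]) := by
    constructor
    · exact_mod_cast hn
    · exact LipschitzWith.of_dist_le_mul fun x y => hdist n x y
  have : Nonempty C(Set.Icc (0 : ℝ) T, F) := ⟨0⟩
  set x₀ := ContractingWith.fixedPoint (Φ^[n]) hcontr with hx₀def
  have hx₀ : Φ^[n] x₀ = x₀ := hcontr.fixedPoint_isFixedPt
  have hfix : Φ x₀ = x₀ := by
    have h1 : Φ^[n] (Φ x₀) = Φ x₀ := by
      rw [← Function.iterate_succ_apply, Function.iterate_succ_apply', hx₀]
    have h2 := hcontr.fixedPoint_unique h1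
    rw [h2, ← hx₀def]
  have hfixEU : ∃! x : C(Set.Icc (0 : ℝ) T, F), Φ x = x := by
    refine ⟨x₀, hfix, fun y hy => ?_⟩
    have h1 : Φ^[n] y = y := Function.IsFixedPt.iterate hy n
    rw [hcontr.fixedPoint_unique h1, ← hx₀def]
  obtain ⟨x, hx, hux⟩ := hfixEU
  refine ⟨x, fun t => ?_, fun y hy => ?_⟩
  · conv_lhs => rw [← hx]
    exact hΦ x t
  · exact hux y (ContinuousMap.ext fun t => (hΦ y t).trans (hy t).symm)

end VolterraAux

/-- The non-local non-linearity `F(u) = (V₁ u, u) V₂ u`. -/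
def nlTerm {E : Type*} [NormedAddCommGroup E] [InnerProductSpace ℂ E]
    (M₁ M₂ : E →L[ℂ] E) (x : E) : E :=
  ⟪M₁ x, x⟫_ℂ • M₂ x

/-- (regularity: the `H¹_Q` solution cannot blow up before the `L²` solution)
Let `H` be self-adjoint and bounded below with `H + N > 1`, generating the unitary group
`U t = e^{-itH}` on `E = L²`.  The space `E₁ = H¹_Q = D((H+N)^{1/2})` is modelled as a
Hilbert space continuously and injectively embedded in `E` by `J` (so that the `H¹_Q` norm is
`‖(H+N)^{1/2}·‖_{L²}`); the group restricts to a group `U₁` on `E₁` (`J ∘ U₁ t = U t ∘ J`),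
`V₁ ∈ L^∞` gives the bounded operator `M₁` on `E`, and `V₂ ∈ W^{1,∞}` is such that
`(H+N)^{1/2} V₂ (H+N)^{-1/2}` is bounded on `L²`, i.e. multiplication by `V₂` restricts to a
bounded operator `M₂'` on `E₁` compatible with `M₂` on `E`.  If `u ∈ C([0,T], L²)` solves the
integral equation with initial datum `φ = J ψ ∈ H¹_Q`, then `u ∈ C([0,T], H¹_Q)`. -/
theorem stmt_10 {E E₁ : Type*}
    [NormedAddCommGroup E] [InnerProductSpace ℂ E] [CompleteSpace E]
    [NormedAddCommGroup E₁] [InnerProductSpace ℂ E₁] [CompleteSpace E₁]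
    (U : ℝ → E →L[ℂ] E) (hU0 : U 0 = 1) (hUadd : ∀ s t : ℝ, U (s + t) = U s * U t)
    (hUiso : ∀ (t : ℝ) (x : E), ‖U t x‖ = ‖x‖)
    (hUcont : ∀ x : E, Continuous fun t => U t x)
    (U₁ : ℝ → E₁ →L[ℂ] E₁) (hU₁0 : U₁ 0 = 1)
    (hU₁add : ∀ s t : ℝ, U₁ (s + t) = U₁ s * U₁ t)
    (hU₁iso : ∀ (t : ℝ) (x : E₁), ‖U₁ t x‖ = ‖x‖)
    (hU₁cont : ∀ x : E₁, Continuous fun t => U₁ t x)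
    (J : E₁ →L[ℂ] E) (hJinj : Function.Injective J)
    (hJU : ∀ (t : ℝ) (x : E₁), J (U₁ t x) = U t (J x))
    (M₁ M₂ : E →L[ℂ] E) (M₂' : E₁ →L[ℂ] E₁)
    (hM₂ : ∀ x : E₁, J (M₂' x) = M₂ (J x))
    (T : ℝ) (hT : 0 < T) (ψ : E₁) (u : ℝ → E)
    (hc : ContinuousOn u (Set.Icc 0 T))
    (he : ∀ t ∈ Set.Icc (0 : ℝ) T,
      u t = U t (J ψ) + (Complex.I)⁻¹ •
        ∫ τ in (0 : ℝ)..t, U (t - τ) (nlTerm M₁ M₂ (u τ))) :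
    ∃ w : ℝ → E₁, ContinuousOn w (Set.Icc 0 T) ∧ ∀ t ∈ Set.Icc (0 : ℝ) T, u t = J (w t) := by
  classical
  set p : ℝ → Set.Icc (0 : ℝ) T := Set.projIcc 0 T hT.le with hp
  have hucont : Continuous fun τ : ℝ => u ((p τ : ℝ)) :=
    (ContinuousOn.restrict hc).comp continuous_projIcc
  set c : ℝ → ℂ := fun τ => ⟪M₁ (u ((p τ : ℝ))), u ((p τ : ℝ))⟫_ℂ with hcdef
  have hccont : Continuous c := Continuous.inner (M₁.continuous.comp hucont) hucont
  obtain ⟨R, hR⟩ := isCompact_Icc.exists_bound_of_continuousOn hc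
  have hR0 : 0 ≤ R := (norm_nonneg (u 0)).trans (hR 0 (Set.left_mem_Icc.mpr hT.le))
  have hCb : ∀ τ : ℝ, ‖c τ‖ ≤ ‖M₁‖ * R * R := by
    intro τ
    have hmem : ((p τ : ℝ)) ∈ Set.Icc (0 : ℝ) T := (p τ).2
    have hv : ‖u ((p τ : ℝ))‖ ≤ R := hR _ hmem
    calc ‖c τ‖ ≤ ‖M₁ (u ((p τ : ℝ)))‖ * ‖u ((p τ : ℝ))‖ := norm_inner_le_norm _ _
      _ ≤ (‖M₁‖ * ‖u ((p τ : ℝ))‖) * ‖u ((p τ : ℝ))‖ := by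
          gcongr
          exact M₁.le_opNorm _
      _ ≤ (‖M₁‖ * R) * R := by gcongr
      _ = ‖M₁‖ * R * R := rfl
  obtain ⟨x₁, hx₁, -⟩ := volterra_existsUnique T hT U₁ hU₁0 hU₁add hU₁iso hU₁cont
    c hccont (‖M₁‖ * R * R) hCb M₂' ψ
  obtain ⟨xE, -, huniq⟩ := volterra_existsUnique T hT U hU0 hUadd hUiso hUcont
    c hccont (‖M₁‖ * R * R) hCb M₂ (J ψ)
  set uRes : C(Set.Icc (0 : ℝ) T, E) := ⟨fun s => u (s : ℝ), hc.restrict⟩ with huRes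
  set jx : C(Set.Icc (0 : ℝ) T, E) := ⟨fun s => J (x₁ s), J.continuous.comp x₁.continuous⟩
    with hjx
  -- `uRes` solves the linear equation
  have hA : ∀ t : Set.Icc (0 : ℝ) T,
      uRes t = U (t : ℝ) (J ψ) + (Complex.I)⁻¹ •
        ∫ τ in (0 : ℝ)..(t : ℝ), U ((t : ℝ) - τ) (c τ • M₂ (uRes (p τ))) := by
    intro t
    have h1 := he (t : ℝ) t.2
    show u (t : ℝ) = _
    rw [h1]
    congr 1
    congr 1
    refine intervalIntegral.integral_congr fun τ hτ => ?_
    have ht0 : (0 : ℝ) ≤ (t : ℝ) := t.2.1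
    rw [Set.uIcc_of_le ht0] at hτ
    have hτT : τ ∈ Set.Icc (0 : ℝ) T := ⟨hτ.1, hτ.2.trans t.2.2⟩
    have hpτ : p τ = ⟨τ, hτT⟩ := Set.projIcc_of_mem hT.le hτT
    congr 1
    have hcτ : c τ = ⟪M₁ (u τ), u τ⟫_ℂ := by simp only [hcdef]; rw [hpτ]
    show nlTerm M₁ M₂ (u τ) = c τ • M₂ (uRes (p τ))
    rw [hcτ, hpτ]
    rfl
  -- `jx` solves the linear equation
  have hB : ∀ t : Set.Icc (0 : ℝ) T,
      jx t = U (t : ℝ) (J ψ) + (Complex.I)⁻¹ •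
        ∫ τ in (0 : ℝ)..(t : ℝ), U ((t : ℝ) - τ) (c τ • M₂ (jx (p τ))) := by
    intro t
    have h1 := hx₁ t
    have hint : IntervalIntegrable
        (fun τ => U₁ ((t : ℝ) - τ) (c τ • M₂' (x₁ (p τ)))) volume 0 (t : ℝ) := by
      apply Continuous.intervalIntegrable
      exact group_apply_continuous U₁ hU₁0 hU₁add hU₁iso hU₁cont
        (continuous_const.sub continuous_id)
        (hccont.smul (M₂'.continuous.comp (x₁.continuous.comp continuous_projIcc)))
    show J (x₁ t) = _
    rw [h1, map_add, ContinuousLinearMap.map_smul, hJU,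
      ← ContinuousLinearMap.intervalIntegral_comp_comm J hint]
    congr 1
    congr 1
    refine intervalIntegral.integral_congr fun τ _ => ?_
    show J (U₁ ((t : ℝ) - τ) (c τ • M₂' (x₁ (p τ)))) = _
    rw [hJU, ContinuousLinearMap.map_smul, hM₂]
    rfl
  have hu_eq : uRes = xE := huniq uRes hA
  have hjx_eq : jx = xE := huniq jx hB
  refine ⟨fun t => x₁ (p t), (x₁.continuous.comp continuous_projIcc).continuousOn, ?_⟩
  intro t ht
  have hpt : p t = ⟨t, ht⟩ := Set.projIcc_of_mem hT.le ht
  have h3 : uRes ⟨t, ht⟩ = jx ⟨t, ht⟩ := by rw [hu_eq, hjx_eq]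
  calc u t = uRes ⟨t, ht⟩ := rfl
    _ = J (x₁ ⟨t, ht⟩) := h3
    _ = J (x₁ (p t)) := by rw [hpt]
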